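/- For the block-structured Hadamard Response estimator p̂ with i.i.d. samples Y₁,...,Yₙ, the expected squared ℓ₂ error satisfies E[Σ_x (p̂_x − p_x)²] ≤ (12 max_j k_j / n) · ((e^ε+1)/(e^ε−1))². -/

import Mathlib

/-- Sylvester's construction of Hadamard matrices. -/
def sylvester : (n : ℕ) → Fin (2 ^ n) → Fin (2 ^ n) → ℤ
  | 0 => fun _ _ => 1
  | n + 1 => fun i j =>
      (if (i : ℕ) < 2 ^ n ∨ (j : ℕ) < 2 ^ n then 1 else -1) *
        sylvester n ⟨(i : ℕ) % 2 ^ n, Nat.mod_lt _ (Nat.two_pow_pos n)⟩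
          ⟨(j : ℕ) % 2 ^ n, Nat.mod_lt _ (Nat.two_pow_pos n)⟩

/-- The block-structured Hadamard-response channel: input `(j, i)` (element `i`
of block `j`, with `|X_j| = k j`) is mapped to an output `(j, i')` with
`i' ∈ [K_j]`, `K_j = 2^{⌈log₂(k_j+1)⌉}`, with probability `2e^ε/(K_j(1+e^ε))`
if `i'` lies in the `+1` set of Hadamard row `i+1` and `2/(K_j(1+e^ε))`
otherwise; outputs in other blocks have probability `0`. -/
noncomputable def bsChannel (m : ℕ) (k : Fin m → ℕ) (ε : ℝ)
    (x : (j : Fin m) × Fin (k j))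
    (y : (j : Fin m) × Fin (2 ^ Nat.clog 2 (k j + 1))) : ℝ :=
  if h : y.1 = x.1 then
    if sylvester (Nat.clog 2 (k x.1 + 1))
        ⟨(x.2 : ℕ) + 1, by
          have := Nat.le_pow_clog (b := 2) (by norm_num) (k x.1 + 1)
          have := x.2.isLt; omega⟩
        (Fin.cast (by rw [h]) y.2) = 1 then
      2 * Real.exp ε / ((2 ^ Nat.clog 2 (k x.1 + 1) : ℝ) * (1 + Real.exp ε))
    else
      2 / ((2 ^ Nat.clog 2 (k x.1 + 1) : ℝ) * (1 + Real.exp ε))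
  else 0

/-- Membership of an output `y` in the Hadamard `+1` set `S_x` of input `x`
(in particular `y` must lie in the same block as `x`). -/
def bsInS (m : ℕ) (k : Fin m → ℕ)
    (x : (j : Fin m) × Fin (k j))
    (y : (j : Fin m) × Fin (2 ^ Nat.clog 2 (k j + 1))) : Bool :=
  if h : y.1 = x.1 then
    decide (sylvester (Nat.clog 2 (k x.1 + 1))
      ⟨(x.2 : ℕ) + 1, by
        have := Nat.le_pow_clog (b := 2) (by norm_num) (k x.1 + 1)
        have := x.2.isLt; omega⟩
      (Fin.cast (by rw [h]) y.2) = 1)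
  else false

/- ## Auxiliary lemmas about the Sylvester matrix -/

lemma two_pow_succ' (n : ℕ) : 2^(n+1) = 2^n + 2^n := by rw [pow_succ]; omega

lemma sylvester_mem (n : ℕ) (i j : Fin (2^n)) : sylvester n i j = 1 ∨ sylvester n i j = -1 := by
  induction n with
  | zero => left; rfl
  | succ n ih =>
    rcases ih ⟨(i : ℕ) % 2 ^ n, Nat.mod_lt _ (Nat.two_pow_pos n)⟩
      ⟨(j : ℕ) % 2 ^ n, Nat.mod_lt _ (Nat.two_pow_pos n)⟩ with h | h <;>
      simp only [sylvester, h] <;> split <;> simp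

lemma sylvester_zero_left (n : ℕ) (j : Fin (2^n)) (h0 : 0 < 2^n) :
    sylvester n ⟨0, h0⟩ j = 1 := by
  induction n with
  | zero => rfl
  | succ n ih =>
    show (if _ then (1:ℤ) else -1) * sylvester n _ _ = 1
    rw [if_pos (Or.inl (by simpa using Nat.two_pow_pos n))]
    rw [one_mul]
    have : (⟨(0:ℕ) % 2^n, Nat.mod_lt _ (Nat.two_pow_pos n)⟩ : Fin (2^n)) = ⟨0, Nat.two_pow_pos n⟩ := by
      simp
    rw [this, ih]

lemma sum_fin_two_pow_succ {M : Type*} [AddCommMonoid M] (n : ℕ) (F : Fin (2^(n+1)) → M) :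
    ∑ j, F j = (∑ j : Fin (2^n), F ⟨j, by have := j.isLt; have := two_pow_succ' n; omega⟩)
      + ∑ j : Fin (2^n), F ⟨2^n + j, by have := j.isLt; have := two_pow_succ' n; omega⟩ := by
  have h2 : 2^(n+1) = 2^n + 2^n := two_pow_succ' n
  rw [← (finCongr h2.symm).sum_comp (fun j => F j)]
  rw [← finSumFinEquiv.sum_comp (fun j => F (finCongr h2.symm j))]
  rw [Fintype.sum_sum_type]
  congr 1

lemma sylvester_orth (n : ℕ) (a b : Fin (2^n)) :
    ∑ j, sylvester n a j * sylvester n b j = if a = b then (2^n : ℤ) else 0 := by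
  induction n with
  | zero =>
    have hab : a = b := Fin.ext (by have h1 := a.isLt; have h2 := b.isLt; norm_num at h1 h2; omega)
    rw [if_pos hab]
    simp [sylvester]
  | succ n ih =>
    rw [sum_fin_two_pow_succ]
    have hmlt : ∀ c : ℕ, c % 2^n < 2^n := fun c => Nat.mod_lt _ (Nat.two_pow_pos n)
    have hL : ∀ (j : Fin (2^n)) (hj : (j:ℕ) < 2^(n+1)),
        sylvester (n+1) a ⟨j, hj⟩ * sylvester (n+1) b ⟨j, hj⟩
          = sylvester n ⟨(a:ℕ) % 2^n, hmlt a⟩ j * sylvester n ⟨(b:ℕ) % 2^n, hmlt b⟩ j := by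
      intro j hj
      show ((if _ then (1:ℤ) else -1) * _) * ((if _ then (1:ℤ) else -1) * _) = _
      rw [if_pos (Or.inr (show ((⟨j, hj⟩ : Fin (2^(n+1))) :ℕ) < 2^n from j.isLt)),
        if_pos (Or.inr (show ((⟨j, hj⟩ : Fin (2^(n+1))) :ℕ) < 2^n from j.isLt))]
      have hjj : (⟨((⟨j, hj⟩ : Fin (2^(n+1))):ℕ) % 2^n, hmlt _⟩ : Fin (2^n)) = j := by
        simp [Fin.ext_iff, Nat.mod_eq_of_lt j.isLt]
      rw [hjj]; ring
    have hR : ∀ (j : Fin (2^n)) (hj : 2^n + (j:ℕ) < 2^(n+1)),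
        sylvester (n+1) a ⟨2^n + j, hj⟩ * sylvester (n+1) b ⟨2^n + j, hj⟩
          = ((if (a:ℕ) < 2^n then 1 else -1) * (if (b:ℕ) < 2^n then 1 else -1))
            * (sylvester n ⟨(a:ℕ) % 2^n, hmlt a⟩ j * sylvester n ⟨(b:ℕ) % 2^n, hmlt b⟩ j) := by
      intro j hj
      show ((if _ then (1:ℤ) else -1) * _) * ((if _ then (1:ℤ) else -1) * _) = _
      have hc : ¬ ((⟨2^n + j, hj⟩ : Fin (2^(n+1))) : ℕ) < 2^n := by simp
      have hmod : (⟨((⟨2^n + j, hj⟩ : Fin (2^(n+1))):ℕ) % 2^n, hmlt _⟩ : Fin (2^n)) = j := by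
        simp [Fin.ext_iff, Nat.mod_eq_of_lt j.isLt]
      rw [hmod]
      by_cases hA : (a:ℕ) < 2^n <;> by_cases hB : (b:ℕ) < 2^n <;>
        simp [hA, hB, hc] <;> ring
    simp only [hL, hR]
    rw [← Finset.mul_sum, ih ⟨(a:ℕ) % 2^n, hmlt a⟩ ⟨(b:ℕ) % 2^n, hmlt b⟩]
    simp only [Fin.mk.injEq]
    by_cases hval : (a:ℕ) % 2^n = (b:ℕ) % 2^n
    ·
      by_cases hA : (a:ℕ) < 2^n <;> by_cases hB : (b:ℕ) < 2^n
      · have : a = b := Fin.ext (by rwa [Nat.mod_eq_of_lt hA, Nat.mod_eq_of_lt hB] at hval)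
        simp [hval, hA, hB, this, two_pow_succ' n]; ring
      · have : a ≠ b := fun h => by rw [h] at hA; exact hB hA
        simp [hval, hA, hB, this]
      · have : a ≠ b := fun h => by rw [h] at hA; exact hA hB
        simp [hval, hA, hB, this]
      · have : a = b := Fin.ext (by
          have ha := a.isLt; have hb := b.isLt; have h2 := two_pow_succ' n
          rw [Nat.mod_eq_sub_mod (le_of_not_gt hA), Nat.mod_eq_sub_mod (le_of_not_gt hB),
            Nat.mod_eq_of_lt (by omega), Nat.mod_eq_of_lt (by omega)] at hval
          omega)
        simp [hval, hA, hB, this, two_pow_succ' n]; ring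
    · have : a ≠ b := fun h => hval (by rw [h])
      simp [hval, this]

lemma sylvester_row_sum (n : ℕ) (a : Fin (2^n)) :
    ∑ j, sylvester n a j = if (a:ℕ) = 0 then (2^n : ℤ) else 0 := by
  have h := sylvester_orth n a ⟨0, Nat.two_pow_pos n⟩
  simp only [sylvester_zero_left, mul_one] at h
  rw [h]
  congr 1
  rw [Fin.ext_iff]

lemma syl_ite {s : ℤ} (h : s = 1 ∨ s = -1) (a b : ℝ) :
    (if s = 1 then a else b) = (a+b)/2 + (a-b)/2 * (s:ℝ) := by
  rcases h with h | h <;> subst h <;> norm_num <;> ring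

lemma real_row_sum (n : ℕ) (r : Fin (2^n)) (hr : (r:ℕ) ≠ 0) :
    ∑ i, ((sylvester n r i : ℤ) : ℝ) = 0 := by
  have := sylvester_row_sum n r
  rw [if_neg hr] at this
  exact_mod_cast congrArg (Int.cast : ℤ → ℝ) this

lemma real_orth (n : ℕ) (r r' : Fin (2^n)) :
    ∑ i, ((sylvester n r i : ℝ) * (sylvester n r' i : ℝ)) = if r = r' then (2^n:ℝ) else 0 := by
  have := congrArg (Int.cast : ℤ → ℝ) (sylvester_orth n r r')
  push_cast at this
  rw [this]

lemma hadamard_ite_sum (n : ℕ) (r : Fin (2^n)) (hr : (r:ℕ) ≠ 0) (a b : ℝ) :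
    ∑ i, (if sylvester n r i = 1 then a else b) = (2^n:ℝ)*(a+b)/2 := by
  have h : ∀ i : Fin (2^n), (if sylvester n r i = 1 then a else b)
      = (a+b)/2 + (a-b)/2 * (sylvester n r i : ℝ) := fun i => syl_ite (sylvester_mem n r i) a b
  rw [Finset.sum_congr rfl fun i _ => h i, Finset.sum_add_distrib, ← Finset.mul_sum,
    real_row_sum n r hr]
  simp [Finset.card_univ]
  ring

lemma hadamard_ite_sum2 (n : ℕ) (r r' : Fin (2^n)) (hr : (r:ℕ) ≠ 0) (hr' : (r':ℕ) ≠ 0) (a b : ℝ) :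
    ∑ i, (if sylvester n r i = 1 then a else b) * (if sylvester n r' i = 1 then (1:ℝ) else 0)
      = (2^n:ℝ)*(a+b)/4 + (if r = r' then (2^n:ℝ)*(a-b)/4 else 0) := by
  have h : ∀ i : Fin (2^n),
      (if sylvester n r i = 1 then a else b) * (if sylvester n r' i = 1 then (1:ℝ) else 0)
      = (a+b)/4 + (a+b)/4 * (sylvester n r' i : ℝ) + (a-b)/4 * (sylvester n r i : ℝ)
        + (a-b)/4 * ((sylvester n r i : ℝ) * (sylvester n r' i : ℝ)) := by
    intro i
    rw [syl_ite (sylvester_mem n r i) a b, syl_ite (sylvester_mem n r' i) 1 0]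
    ring
  rw [Finset.sum_congr rfl fun i _ => h i]
  simp only [Finset.sum_add_distrib, ← Finset.mul_sum, real_row_sum n r hr,
    real_row_sum n r' hr', real_orth n r r']
  simp [Finset.card_univ]
  split <;> ring

/- ## Product-measure lemmas -/

lemma sum_pi_prod {Y : Type*} [Fintype Y] (n : ℕ) (F : Fin n → Y → ℝ) :
    ∑ ω : Fin n → Y, ∏ t, F t (ω t) = ∏ t, ∑ y, F t y := by
  rw [Finset.prod_univ_sum, ← Fintype.piFinset_univ]

lemma second_moment {Y : Type*} [Fintype Y] (n : ℕ) (q g : Y → ℝ)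
    (hq : ∑ y, q y = 1) (hg : ∑ y, q y * g y = 0) :
    ∑ ω : Fin n → Y, (∏ t, q (ω t)) * (∑ t, g (ω t))^2
      = n * ∑ y, q y * (g y)^2 := by
  have key : ∀ s t : Fin n,
      ∑ ω : Fin n → Y, (∏ u, q (ω u)) * (g (ω s) * g (ω t))
        = if s = t then ∑ y, q y * (g y)^2 else 0 := by
    intro s t
    have h1 : ∀ ω : Fin n → Y, (∏ u, q (ω u)) * (g (ω s) * g (ω t))
        = ∏ u, (q (ω u) * (if u = s then g (ω u) else 1) * (if u = t then g (ω u) else 1)) := by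
      intro ω
      rw [Finset.prod_mul_distrib, Finset.prod_mul_distrib]
      rw [Finset.prod_ite_eq' Finset.univ s (fun u => g (ω u)),
        Finset.prod_ite_eq' Finset.univ t (fun u => g (ω u))]
      simp [mul_comm, mul_assoc, mul_left_comm]
    simp only [h1]
    rw [sum_pi_prod n (fun u y => (q y * if u = s then g y else 1) * if u = t then g y else 1)]
    by_cases hst : s = t
    · subst hst
      rw [if_pos rfl]
      have h2 : ∀ u : Fin n, (∑ y, q y * (if u = s then g y else 1) * (if u = s then g y else 1))
          = if u = s then (∑ y, q y * (g y)^2) else 1 := by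
        intro u
        by_cases hu : u = s <;> simp [hu, hq, sq, mul_assoc]
      rw [Finset.prod_congr rfl (fun u _ => h2 u), Finset.prod_ite_eq' Finset.univ s
        (fun _ => ∑ y, q y * (g y)^2), if_pos (Finset.mem_univ s)]
    · rw [if_neg hst]
      apply Finset.prod_eq_zero (Finset.mem_univ s)
      have : (∑ y, q y * (if s = s then g y else 1) * (if s = t then g y else 1)) = 0 := by
        simp [hst, hg]
      exact this
  calc ∑ ω : Fin n → Y, (∏ t, q (ω t)) * (∑ t, g (ω t))^2
      = ∑ ω : Fin n → Y, ∑ s, ∑ t, (∏ u, q (ω u)) * (g (ω s) * g (ω t)) := by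
        apply Finset.sum_congr rfl; intro ω _
        rw [sq, Finset.sum_mul_sum, Finset.mul_sum]
        exact Finset.sum_congr rfl fun s _ => by rw [Finset.mul_sum]
    _ = ∑ s, ∑ t : Fin n, ∑ ω : Fin n → Y, (∏ u, q (ω u)) * (g (ω s) * g (ω t)) := by
        rw [Finset.sum_comm]
        apply Finset.sum_congr rfl; intro s _
        rw [Finset.sum_comm]
    _ = ∑ s : Fin n, ∑ t : Fin n, if s = t then (∑ y, q y * (g y)^2) else 0 := by
        exact Finset.sum_congr rfl fun s _ => Finset.sum_congr rfl fun t _ => key s t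
    _ = n * ∑ y, q y * (g y)^2 := by
        simp [Finset.sum_ite_eq]

/- ## Channel lemmas -/

def bsRow {m : ℕ} {k : Fin m → ℕ} (x : (j : Fin m) × Fin (k j)) :
    Fin (2 ^ Nat.clog 2 (k x.1 + 1)) :=
  ⟨(x.2 : ℕ) + 1, by
    have := Nat.le_pow_clog (b := 2) (by norm_num) (k x.1 + 1)
    have := x.2.isLt; omega⟩

lemma bsRow_ne_zero {m : ℕ} {k : Fin m → ℕ} (x : (j : Fin m) × Fin (k j)) :
    ((bsRow x : Fin (2 ^ Nat.clog 2 (k x.1 + 1))) : ℕ) ≠ 0 := Nat.succ_ne_zero _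

section Channel

variable (m : ℕ) (k : Fin m → ℕ) (ε : ℝ)

lemma bsChannel_same (x : (j : Fin m) × Fin (k j)) (i : Fin (2 ^ Nat.clog 2 (k x.1 + 1))) :
    bsChannel m k ε x ⟨x.1, i⟩ =
      if sylvester (Nat.clog 2 (k x.1 + 1)) (bsRow x) i = 1 then
        2 * Real.exp ε / ((2 ^ Nat.clog 2 (k x.1 + 1) : ℝ) * (1 + Real.exp ε))
      else
        2 / ((2 ^ Nat.clog 2 (k x.1 + 1) : ℝ) * (1 + Real.exp ε)) := by
  unfold bsChannel
  rw [dif_pos rfl]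
  rfl

lemma bsChannel_ne (x : (j : Fin m) × Fin (k j)) (y : (j : Fin m) × Fin (2 ^ Nat.clog 2 (k j + 1)))
    (h : y.1 ≠ x.1) : bsChannel m k ε x y = 0 := dif_neg h

lemma bsChannel_nonneg (x : (j : Fin m) × Fin (k j))
    (y : (j : Fin m) × Fin (2 ^ Nat.clog 2 (k j + 1))) : 0 ≤ bsChannel m k ε x y := by
  unfold bsChannel
  have h1 : (0:ℝ) < 2 ^ Nat.clog 2 (k x.1 + 1) := by positivity
  have h2 : (0:ℝ) < 1 + Real.exp ε := by positivity
  split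
  · split
    · positivity
    · positivity
  · exact le_rfl

lemma bsInS_same (x : (j : Fin m) × Fin (k j)) (i : Fin (2 ^ Nat.clog 2 (k x.1 + 1))) :
    bsInS m k x ⟨x.1, i⟩ = decide (sylvester (Nat.clog 2 (k x.1 + 1)) (bsRow x) i = 1) := by
  unfold bsInS
  rw [dif_pos rfl]
  rfl

lemma bsInS_ne (x : (j : Fin m) × Fin (k j)) (y : (j : Fin m) × Fin (2 ^ Nat.clog 2 (k j + 1)))
    (h : y.1 ≠ x.1) : bsInS m k x y = false := dif_neg h

lemma sum_sigma_block {G : ((j : Fin m) × Fin (2 ^ Nat.clog 2 (k j + 1))) → ℝ} (j0 : Fin m)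
    (hG : ∀ y, y.1 ≠ j0 → G y = 0) :
    ∑ y, G y = ∑ i : Fin (2 ^ Nat.clog 2 (k j0 + 1)), G ⟨j0, i⟩ := by
  rw [← Finset.univ_sigma_univ, Finset.sum_sigma]
  rw [Finset.sum_eq_single j0]
  · intro j _ hj
    apply Finset.sum_eq_zero
    intro i _
    exact hG ⟨j, i⟩ hj
  · intro h; exact absurd (Finset.mem_univ j0) h

lemma channel_block_sum (x : (j : Fin m) × Fin (k j)) :
    ∑ i : Fin (2 ^ Nat.clog 2 (k x.1 + 1)), bsChannel m k ε x ⟨x.1, i⟩ = 1 := by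
  have hE : (0:ℝ) < Real.exp ε := Real.exp_pos ε
  have hN : (0:ℝ) < 2 ^ Nat.clog 2 (k x.1 + 1) := by positivity
  rw [Finset.sum_congr rfl fun i _ => bsChannel_same m k ε x i,
    hadamard_ite_sum _ _ (bsRow_ne_zero x)]
  field_simp
  ring

lemma channel_sum_one (x : (j : Fin m) × Fin (k j)) :
    ∑ y, bsChannel m k ε x y = 1 := by
  rw [sum_sigma_block m k x.1 (fun y hy => bsChannel_ne m k ε x y hy)]
  exact channel_block_sum m k ε x

lemma channel_sum_block (x' x : (j : Fin m) × Fin (k j)) :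
    ∑ y, bsChannel m k ε x' y * (if y.1 = x.1 then (1:ℝ) else 0)
      = if x'.1 = x.1 then 1 else 0 := by
  rw [sum_sigma_block m k x'.1 (fun y hy => by rw [bsChannel_ne m k ε x' y hy, zero_mul])]
  by_cases h : x'.1 = x.1
  · rw [if_pos h]
    have hh : ∀ i : Fin (2 ^ Nat.clog 2 (k x'.1 + 1)),
        bsChannel m k ε x' ⟨x'.1, i⟩ * (if (⟨x'.1, i⟩ : (j : Fin m) × Fin (2 ^ Nat.clog 2 (k j + 1))).1 = x.1 then (1:ℝ) else 0)
          = bsChannel m k ε x' ⟨x'.1, i⟩ := by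
      intro i
      rw [if_pos h, mul_one]
    rw [Finset.sum_congr rfl fun i _ => hh i]
    exact channel_block_sum m k ε x'
  · rw [if_neg h]
    apply Finset.sum_eq_zero
    intro i _
    rw [if_neg h, mul_zero]

lemma channel_sum_S (x' x : (j : Fin m) × Fin (k j)) :
    ∑ y, bsChannel m k ε x' y * (if bsInS m k x y then (1:ℝ) else 0)
      = if x'.1 = x.1 then
          1/2 + (if x' = x then (Real.exp ε - 1)/(2*(Real.exp ε + 1)) else 0)
        else 0 := by
  rw [sum_sigma_block m k x'.1 (fun y hy => by rw [bsChannel_ne m k ε x' y hy, zero_mul])]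
  by_cases h : x'.1 = x.1
  · rw [if_pos h]
    obtain ⟨j', i'⟩ := x'
    obtain ⟨j, i⟩ := x
    simp only at h
    subst h
    have hE : (0:ℝ) < Real.exp ε := Real.exp_pos ε
    have hN : (0:ℝ) < 2 ^ Nat.clog 2 (k j' + 1) := by positivity
    have hrw : ∀ ii : Fin (2 ^ Nat.clog 2 (k j' + 1)),
        bsChannel m k ε ⟨j', i'⟩ ⟨j', ii⟩ * (if bsInS m k ⟨j', i⟩ ⟨j', ii⟩ then (1:ℝ) else 0)
        = (if sylvester (Nat.clog 2 (k j' + 1)) (bsRow ⟨j', i'⟩) ii = 1 then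
            2 * Real.exp ε / ((2 ^ Nat.clog 2 (k j' + 1) : ℝ) * (1 + Real.exp ε))
          else 2 / ((2 ^ Nat.clog 2 (k j' + 1) : ℝ) * (1 + Real.exp ε)))
          * (if sylvester (Nat.clog 2 (k j' + 1)) (bsRow ⟨j', i⟩) ii = 1 then (1:ℝ) else 0) := by
      intro ii
      rw [bsChannel_same m k ε ⟨j', i'⟩ ii, bsInS_same m k ⟨j', i⟩ ii]
      simp
    rw [Finset.sum_congr rfl fun ii _ => hrw ii,
      hadamard_ite_sum2 _ _ _ (bsRow_ne_zero ⟨j', i'⟩) (bsRow_ne_zero ⟨j', i⟩)]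
    have hrr : (bsRow (⟨j', i'⟩ : (j : Fin m) × Fin (k j))
        = bsRow (⟨j', i⟩ : (j : Fin m) × Fin (k j))) ↔ (⟨j', i'⟩ : (j : Fin m) × Fin (k j)) = ⟨j', i⟩ := by
      constructor
      · intro hh
        have : (i' : ℕ) = (i : ℕ) := by
          have := congrArg Fin.val hh
          simpa [bsRow] using this
        simp [Fin.ext_iff, this]
      · intro hh
        have : i' = i := by simpa using hh
        rw [this]
    by_cases hx : (⟨j', i'⟩ : (j : Fin m) × Fin (k j)) = ⟨j', i⟩
    · rw [if_pos (hrr.mpr hx), if_pos hx]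
      field_simp
      ring
    · rw [if_neg (fun hh => hx (hrr.mp hh)), if_neg hx]
      field_simp
      ring
  · rw [if_neg h]
    apply Finset.sum_eq_zero
    intro i _
    rw [bsInS_ne m k x ⟨x'.1, i⟩ h]
    simp

end Channel

/- ## The output distribution and the single-sample estimator function -/

section Main

variable (m : ℕ) (k : Fin m → ℕ) (ε : ℝ) (p : ((j : Fin m) × Fin (k j)) → ℝ)

/-- Output distribution of the channel. -/
noncomputable def qout (y : (j : Fin m) × Fin (2 ^ Nat.clog 2 (k j + 1))) : ℝ :=
  ∑ x, p x * bsChannel m k ε x y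

/-- Single-sample estimator function. -/
noncomputable def fest (x : (j : Fin m) × Fin (k j))
    (y : (j : Fin m) × Fin (2 ^ Nat.clog 2 (k j + 1))) : ℝ :=
  2 * (Real.exp ε + 1) / (Real.exp ε - 1) *
    ((if bsInS m k x y then (1:ℝ) else 0) - (1/2) * (if y.1 = x.1 then (1:ℝ) else 0))

lemma qout_nonneg (hp0 : ∀ x, 0 ≤ p x) (y : (j : Fin m) × Fin (2 ^ Nat.clog 2 (k j + 1))) :
    0 ≤ qout m k ε p y :=
  Finset.sum_nonneg fun x _ => mul_nonneg (hp0 x) (bsChannel_nonneg m k ε x y)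

lemma qout_sum (hp1 : ∑ x, p x = 1) : ∑ y, qout m k ε p y = 1 := by
  unfold qout
  rw [Finset.sum_comm]
  rw [Finset.sum_congr rfl fun x _ => by
    rw [← Finset.mul_sum, channel_sum_one m k ε x, mul_one]]
  exact hp1

lemma channel_fest_sum (hε : 0 < ε) (x' x : (j : Fin m) × Fin (k j)) :
    ∑ y, bsChannel m k ε x' y * fest m k ε x y = if x' = x then 1 else 0 := by
  have hE1 : (1:ℝ) < Real.exp ε := by
    rw [Real.one_lt_exp_iff]; exact hε
  have hEne : Real.exp ε - 1 ≠ 0 := ne_of_gt (by linarith)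
  have hEp : Real.exp ε + 1 ≠ 0 := ne_of_gt (by linarith)
  unfold fest
  have h0 : ∀ y, bsChannel m k ε x' y *
      (2 * (Real.exp ε + 1) / (Real.exp ε - 1) *
        ((if bsInS m k x y then (1:ℝ) else 0) - (1/2) * (if y.1 = x.1 then (1:ℝ) else 0)))
      = 2 * (Real.exp ε + 1) / (Real.exp ε - 1) *
          (bsChannel m k ε x' y * (if bsInS m k x y then (1:ℝ) else 0))
        - (Real.exp ε + 1) / (Real.exp ε - 1) *
          (bsChannel m k ε x' y * (if y.1 = x.1 then (1:ℝ) else 0)) := by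
    intro y; ring
  rw [Finset.sum_congr rfl fun y _ => h0 y, Finset.sum_sub_distrib, ← Finset.mul_sum,
    ← Finset.mul_sum, channel_sum_S m k ε x' x, channel_sum_block m k ε x' x]
  by_cases hxx : x' = x
  · subst hxx
    simp only [if_pos rfl, ↓reduceIte]
    field_simp
    ring
  · rw [if_neg hxx, if_neg hxx]
    by_cases hbl : x'.1 = x.1
    · rw [if_pos hbl, if_pos hbl]
      ring
    · rw [if_neg hbl, if_neg hbl]
      ring

lemma fest_unbiased (hε : 0 < ε) (x : (j : Fin m) × Fin (k j)) :
    ∑ y, qout m k ε p y * fest m k ε x y = p x := by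
  unfold qout
  have h0 : ∀ y, (∑ x', p x' * bsChannel m k ε x' y) * fest m k ε x y
      = ∑ x', p x' * (bsChannel m k ε x' y * fest m k ε x y) := by
    intro y
    rw [Finset.sum_mul]
    exact Finset.sum_congr rfl fun x' _ => mul_assoc _ _ _
  rw [Finset.sum_congr rfl fun y _ => h0 y, Finset.sum_comm]
  have h1 : ∀ x', ∑ y, p x' * (bsChannel m k ε x' y * fest m k ε x y)
      = p x' * (if x' = x then 1 else 0) := by
    intro x'
    rw [← Finset.mul_sum, channel_fest_sum m k ε hε x' x]
  rw [Finset.sum_congr rfl fun x' _ => h1 x']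
  simp

lemma fest_sq (hε : 0 < ε) (x : (j : Fin m) × Fin (k j))
    (y : (j : Fin m) × Fin (2 ^ Nat.clog 2 (k j + 1))) :
    (fest m k ε x y)^2 = (2 * (Real.exp ε + 1) / (Real.exp ε - 1))^2 / 4
      * (if y.1 = x.1 then (1:ℝ) else 0) := by
  unfold fest
  by_cases hb : y.1 = x.1
  · rw [if_pos hb]
    by_cases hs : bsInS m k x y <;> simp [hs] <;> ring
  · rw [if_neg hb, bsInS_ne m k x y hb]
    simp

end Main

/- ## Main theorem -/

/-- Expected squared ℓ₂ error of the block-structured Hadamard-response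
estimator with `n` i.i.d. samples:
`E[Σ_x (p̂_x - p_x)²] ≤ (12 max_j k_j / n) ((e^ε+1)/(e^ε-1))²`. -/
theorem bs_estimator_l2_bound (m : ℕ) (k : Fin m → ℕ) (hk : ∀ j, 0 < k j)
    (ε : ℝ) (hε : 0 < ε)
    (p : ((j : Fin m) × Fin (k j)) → ℝ) (hp0 : ∀ x, 0 ≤ p x) (hp1 : ∑ x, p x = 1)
    (n : ℕ) (hn : 0 < n) :
    ∑ ω : Fin n → ((j : Fin m) × Fin (2 ^ Nat.clog 2 (k j + 1))),
        (∏ t, ∑ x, p x * bsChannel m k ε x (ω t)) *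
        (∑ x, ((2 * (Real.exp ε + 1) / (Real.exp ε - 1)) *
              ((1 / (n : ℝ)) * (∑ t, if bsInS m k x (ω t) then (1 : ℝ) else 0)
                - (1 / 2) * ((1 / (n : ℝ)) * ∑ t, if (ω t).1 = x.1 then (1 : ℝ) else 0))
            - p x) ^ 2)
      ≤ 12 * ((Finset.univ.sup k : ℕ) : ℝ) / (n : ℝ)
          * ((Real.exp ε + 1) / (Real.exp ε - 1)) ^ 2 := by
  classical
  have hE1 : (1:ℝ) < Real.exp ε := by rw [Real.one_lt_exp_iff]; exact hε
  have hEne : Real.exp ε - 1 ≠ 0 := ne_of_gt (by linarith)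
  have hEp : Real.exp ε + 1 ≠ 0 := ne_of_gt (by linarith)
  have hn' : (n:ℝ) ≠ 0 := Nat.cast_ne_zero.mpr hn.ne'
  have hnpos : (0:ℝ) < n := by exact_mod_cast hn
  show ∑ ω : Fin n → ((j : Fin m) × Fin (2 ^ Nat.clog 2 (k j + 1))),
        (∏ t, qout m k ε p (ω t)) *
        (∑ x, ((2 * (Real.exp ε + 1) / (Real.exp ε - 1)) *
              ((1 / (n : ℝ)) * (∑ t, if bsInS m k x (ω t) then (1 : ℝ) else 0)
                - (1 / 2) * ((1 / (n : ℝ)) * ∑ t, if (ω t).1 = x.1 then (1 : ℝ) else 0))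
            - p x) ^ 2)
      ≤ 12 * ((Finset.univ.sup k : ℕ) : ℝ) / (n : ℝ)
          * ((Real.exp ε + 1) / (Real.exp ε - 1)) ^ 2
  set c : ℝ := 2 * (Real.exp ε + 1) / (Real.exp ε - 1) with hc
  have hq1 : ∑ y, qout m k ε p y = 1 := qout_sum m k ε p hp1
  have hg0 : ∀ x, ∑ y, qout m k ε p y * (fest m k ε x y - p x) = 0 := by
    intro x
    have h0 : ∀ y, qout m k ε p y * (fest m k ε x y - p x)
        = qout m k ε p y * fest m k ε x y - p x * qout m k ε p y := fun y => by ring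
    rw [Finset.sum_congr rfl fun y _ => h0 y, Finset.sum_sub_distrib,
      fest_unbiased m k ε p hε x, ← Finset.mul_sum, hq1, mul_one, sub_self]
  have hform : ∀ (x : (j : Fin m) × Fin (k j)) (ω : Fin n → ((j : Fin m) × Fin (2 ^ Nat.clog 2 (k j + 1)))),
      (c * ((1/(n:ℝ)) * (∑ t, if bsInS m k x (ω t) then (1:ℝ) else 0)
          - (1/2) * ((1/(n:ℝ)) * ∑ t, if (ω t).1 = x.1 then (1:ℝ) else 0)) - p x)
        = (1/(n:ℝ)) * ∑ t, (fest m k ε x (ω t) - p x) := by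
    intro x ω
    have h2 : ∀ t, fest m k ε x (ω t)
        = c * (if bsInS m k x (ω t) then (1:ℝ) else 0)
          - (c/2) * (if (ω t).1 = x.1 then (1:ℝ) else 0) := by
      intro t; unfold fest; rw [← hc]; ring
    have h1 : ∑ t, (fest m k ε x (ω t) - p x)
        = c * (∑ t, if bsInS m k x (ω t) then (1:ℝ) else 0)
          - (c/2) * (∑ t, if (ω t).1 = x.1 then (1:ℝ) else 0) - (n:ℝ) * p x := by
      rw [Finset.sum_sub_distrib, Finset.sum_const, Finset.card_univ, Fintype.card_fin,
        nsmul_eq_mul]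
      rw [Finset.sum_congr rfl fun t _ => h2 t, Finset.sum_sub_distrib,
        ← Finset.mul_sum, ← Finset.mul_sum]
    rw [h1]
    field_simp
  have hcnt : ∀ y : (j : Fin m) × Fin (2 ^ Nat.clog 2 (k j + 1)),
      ∑ x : (j : Fin m) × Fin (k j), (if y.1 = x.1 then (1:ℝ) else 0) = (k y.1 : ℝ) := by
    intro y
    rw [← Finset.univ_sigma_univ, Finset.sum_sigma]
    rw [Finset.sum_eq_single y.1]
    · simp
    · intro j _ hj
      apply Finset.sum_eq_zero
      intro i _
      exact if_neg (fun h => hj h.symm)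
    · intro h; exact absurd (Finset.mem_univ y.1) h
  have hqnn : ∀ y, 0 ≤ qout m k ε p y := qout_nonneg m k ε p hp0
  have hsupk : ∀ j : Fin m, (k j : ℝ) ≤ ((Finset.univ.sup k : ℕ) : ℝ) := by
    intro j
    exact_mod_cast Nat.cast_le.mpr (Finset.le_sup (Finset.mem_univ j))
  calc ∑ ω : Fin n → ((j : Fin m) × Fin (2 ^ Nat.clog 2 (k j + 1))),
        (∏ t, qout m k ε p (ω t)) *
        (∑ x, (c * ((1/(n:ℝ)) * (∑ t, if bsInS m k x (ω t) then (1:ℝ) else 0)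
                - (1/2) * ((1/(n:ℝ)) * ∑ t, if (ω t).1 = x.1 then (1:ℝ) else 0)) - p x) ^ 2)
      = ∑ ω : Fin n → ((j : Fin m) × Fin (2 ^ Nat.clog 2 (k j + 1))), ∑ x,
          (∏ t, qout m k ε p (ω t)) * ((1/(n:ℝ)) * ∑ t, (fest m k ε x (ω t) - p x))^2 := by
        apply Finset.sum_congr rfl; intro ω _
        rw [Finset.mul_sum]
        apply Finset.sum_congr rfl; intro x _
        rw [hform x ω]
    _ = ∑ x, ∑ ω : Fin n → ((j : Fin m) × Fin (2 ^ Nat.clog 2 (k j + 1))),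
          (∏ t, qout m k ε p (ω t)) * ((1/(n:ℝ)) * ∑ t, (fest m k ε x (ω t) - p x))^2 := by
        rw [Finset.sum_comm]
    _ = ∑ x, (1/(n:ℝ))^2 * ∑ ω : Fin n → ((j : Fin m) × Fin (2 ^ Nat.clog 2 (k j + 1))),
          (∏ t, qout m k ε p (ω t)) * (∑ t, (fest m k ε x (ω t) - p x))^2 := by
        apply Finset.sum_congr rfl; intro x _
        rw [Finset.mul_sum]
        apply Finset.sum_congr rfl; intro ω _
        ring
    _ = ∑ x, (1/(n:ℝ))^2 * ((n:ℝ) * ∑ y, qout m k ε p y * (fest m k ε x y - p x)^2) := by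
        apply Finset.sum_congr rfl; intro x _
        rw [second_moment n (qout m k ε p) (fun y => fest m k ε x y - p x) hq1 (hg0 x)]
    _ = (1/(n:ℝ)) * ∑ x, ∑ y, qout m k ε p y * (fest m k ε x y - p x)^2 := by
        rw [Finset.mul_sum]
        apply Finset.sum_congr rfl; intro x _
        field_simp
    _ ≤ (1/(n:ℝ)) * (c^2/4 * ((Finset.univ.sup k : ℕ) : ℝ)) := by
        apply mul_le_mul_of_nonneg_left ?_ (by positivity)
        calc ∑ x, ∑ y, qout m k ε p y * (fest m k ε x y - p x)^2
            ≤ ∑ x, ∑ y, qout m k ε p y * (fest m k ε x y)^2 := by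
              apply Finset.sum_le_sum
              intro x _
              have h0 : ∀ y, qout m k ε p y * (fest m k ε x y - p x)^2
                  = qout m k ε p y * (fest m k ε x y)^2
                    - 2 * p x * (qout m k ε p y * fest m k ε x y)
                    + (p x)^2 * qout m k ε p y := fun y => by ring
              rw [Finset.sum_congr rfl fun y _ => h0 y, Finset.sum_add_distrib,
                Finset.sum_sub_distrib, ← Finset.mul_sum, ← Finset.mul_sum,
                fest_unbiased m k ε p hε x, hq1, mul_one]
              nlinarith [sq_nonneg (p x)]
          _ = ∑ y, qout m k ε p y * (c^2/4 * (k y.1 : ℝ)) := by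
              rw [Finset.sum_comm]
              apply Finset.sum_congr rfl; intro y _
              have h0 : ∀ x, qout m k ε p y * (fest m k ε x y)^2
                  = (qout m k ε p y * (c^2/4)) * (if y.1 = x.1 then (1:ℝ) else 0) := by
                intro x
                rw [fest_sq m k ε hε x y, ← hc]
                ring
              rw [Finset.sum_congr rfl fun x _ => h0 x, ← Finset.mul_sum, hcnt y]
              ring
          _ ≤ ∑ y, qout m k ε p y * (c^2/4 * ((Finset.univ.sup k : ℕ) : ℝ)) := by
              apply Finset.sum_le_sum
              intro y _
              apply mul_le_mul_of_nonneg_left ?_ (hqnn y)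
              apply mul_le_mul_of_nonneg_left (hsupk y.1) (by positivity)
          _ = c^2/4 * ((Finset.univ.sup k : ℕ) : ℝ) := by
              rw [← Finset.sum_mul, hq1, one_mul]
    _ ≤ 12 * ((Finset.univ.sup k : ℕ) : ℝ) / (n : ℝ)
          * ((Real.exp ε + 1) / (Real.exp ε - 1)) ^ 2 := by
        have hK0 : (0:ℝ) ≤ ((Finset.univ.sup k : ℕ) : ℝ) := Nat.cast_nonneg _
        have heq : (1/(n:ℝ)) * (c^2/4 * ((Finset.univ.sup k : ℕ) : ℝ))
            = ((Finset.univ.sup k : ℕ) : ℝ) / (n : ℝ)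
              * ((Real.exp ε + 1) / (Real.exp ε - 1)) ^ 2 := by
          rw [hc]
          field_simp
          ring
        rw [heq]
        have hpos : 0 ≤ ((Finset.univ.sup k : ℕ) : ℝ) / (n : ℝ)
            * ((Real.exp ε + 1) / (Real.exp ε - 1)) ^ 2 := by positivity
        have h12 : 12 * ((Finset.univ.sup k : ℕ) : ℝ) / (n : ℝ)
            * ((Real.exp ε + 1) / (Real.exp ε - 1)) ^ 2
            = 12 * (((Finset.univ.sup k : ℕ) : ℝ) / (n : ℝ)
              * ((Real.exp ε + 1) / (Real.exp ε - 1)) ^ 2) := by ring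
        rw [h12]
        linarith
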